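/- Let A, B be distinct points and let C, D, E be points such that D and E both lie in the open segment AB (with A, D, E, B in this order on the line) and C is off the line AB. If the five points {A, B, C, D, E} determine at most three distinct angle values α < β < γ in (0,π), then β = 2α, γ = 3α, and α = π/5 (so the angles are π/5, 2π/5, 3π/5). -/

import Mathlib

open EuclideanGeometry

noncomputable section

abbrev Pt : Type := EuclideanSpace ℝ (Fin 2)

/-- The point (x, y) in the Euclidean plane. -/
def pt (x y : ℝ) : Pt := (WithLp.equiv 2 (Fin 2 → ℝ)).symm ![x, y]

/-- The set of distinct angle values in (0, π) determined by a planar point set. -/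
def angleSet (P : Set Pt) : Set ℝ :=
  {θ : ℝ | θ ∈ Set.Ioo 0 Real.pi ∧
    ∃ x ∈ P, ∃ y ∈ P, ∃ z ∈ P, x ≠ y ∧ y ≠ z ∧ x ≠ z ∧ ∠ x y z = θ}

lemma tri_id {α β γ p q r : ℝ} (hord1 : α < β) (hord2 : β < γ)
    (hp : p = α ∨ p = β ∨ p = γ) (hq : q = α ∨ q = β ∨ q = γ)
    (hr : r = α ∨ r = β ∨ r = γ) (h1 : p < q) (h2 : q < r) :
    p = α ∧ q = β ∧ r = γ := by
  rcases hp with h | h | h <;> rcases hq with h' | h' | h' <;> rcases hr with h'' | h'' | h'' <;>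
    refine ⟨by linarith, by linarith, by linarith⟩

lemma sbtw_of_mem_openSegment {x y z : Pt} (h : y ∈ openSegment ℝ x z) (hxz : x ≠ z) :
    Sbtw ℝ x y z := by
  rw [openSegment_eq_image_lineMap] at h
  obtain ⟨r, hr, rfl⟩ := h
  exact sbtw_lineMap_iff.2 ⟨hxz, hr⟩

theorem stmt10 (A B C D E : Pt) (α β γ : ℝ)
    (hAB : A ≠ B) (hC : ¬ Collinear ℝ ({A, B, C} : Set Pt))
    (hD : D ∈ openSegment ℝ A E) (hE : E ∈ openSegment ℝ D B)
    (hord1 : α < β) (hord2 : β < γ)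
    (hα : α ∈ Set.Ioo 0 Real.pi) (hγ : γ ∈ Set.Ioo 0 Real.pi)
    (hset : angleSet {A, B, C, D, E} = {α, β, γ}) :
    β = 2 * α ∧ γ = 3 * α ∧ α = Real.pi / 5 := by
  -- Betweenness structure
  have hAE : A ≠ E := by
    intro h
    subst h
    rw [openSegment_same, Set.mem_singleton_iff] at hD
    subst hD
    exact hAB (left_mem_openSegment_iff.1 hE)
  have hDB : D ≠ B := by
    intro h
    subst h
    rw [openSegment_same, Set.mem_singleton_iff] at hE
    subst hE
    exact hAB (right_mem_openSegment_iff.1 hD)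
  have hADE : Sbtw ℝ A D E := sbtw_of_mem_openSegment hD hAE
  have hDEB : Sbtw ℝ D E B := sbtw_of_mem_openSegment hE hDB
  have hAEB : Sbtw ℝ A E B := by
    have h1 := hADE.wbtw.sameRay_vsub
    have h2 := hDEB.wbtw.sameRay_vsub
    have h3 : SameRay ℝ (D -ᵥ A) (B -ᵥ E) := by
      refine h1.trans h2 fun h0 => ?_
      exact (hADE.ne_right (vsub_eq_zero_iff_eq.1 h0).symm).elim
    have h4 : SameRay ℝ (E -ᵥ A) (B -ᵥ E) := by
      rw [← vsub_add_vsub_cancel E D A]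
      exact SameRay.add_left h2 h3
    exact ⟨wbtw_iff_sameRay_vsub.2 h4, Ne.symm hAE, hDEB.ne_right⟩
  have hADB : Sbtw ℝ A D B := ⟨hAEB.wbtw.trans_left hADE.wbtw, hADE.ne_left, hDB⟩
  -- Line membership
  set L := line[ℝ, A, B] with hL
  have hAL : A ∈ L := left_mem_affineSpan_pair ℝ A B
  have hBL : B ∈ L := right_mem_affineSpan_pair ℝ A B
  have hDL : D ∈ L := AffineSubspace.mem_of_wbtw hADB.wbtw hAL hBL
  have hEL : E ∈ L := AffineSubspace.mem_of_wbtw hAEB.wbtw hAL hBL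
  have hCL : C ∉ L := by
    intro h
    apply hC
    have h2 : Collinear ℝ ({C, A, B} : Set Pt) := collinear_insert_of_mem_affineSpan_pair h
    have : ({A, B, C} : Set Pt) = {C, A, B} := by
      ext x; simp [or_comm, or_assoc, or_left_comm]
    rwa [this]
  -- Non-collinearity of triples containing C and two line points
  have hncol : ∀ X Y : Pt, X ∈ L → Y ∈ L → X ≠ Y →
      ¬Collinear ℝ ({X, C, Y} : Set Pt) ∧ ¬Collinear ℝ ({C, X, Y} : Set Pt) := by
    intro X Y hX hY hXY
    have key : C ∉ line[ℝ, X, Y] := fun hm =>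
      hCL (affineSpan_pair_le_of_mem_of_mem hX hY hm)
    constructor <;> intro hcol
    · exact key (hcol.mem_affineSpan_of_mem_of_ne (by simp) (by simp) (by simp) hXY)
    · exact key (hcol.mem_affineSpan_of_mem_of_ne (by simp) (by simp) (by simp) hXY)
  have hpos : ∀ x y z : Pt, ¬Collinear ℝ ({x, y, z} : Set Pt) → ∠ x y z ∈ Set.Ioo 0 Real.pi := by
    intro x y z hcol
    constructor
    · rcases (angle_nonneg x y z).lt_or_eq with h | h
      · exact h
      · exact absurd (collinear_of_angle_eq_zero h.symm) hcol
    · rcases (angle_le_pi x y z).lt_or_eq with h | h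
      · exact h
      · exact absurd (collinear_of_angle_eq_pi h) hcol
  -- angle at C between two line points, in (0, π)
  have haC : ∀ X Y : Pt, X ∈ L → Y ∈ L → X ≠ Y → ∠ X C Y ∈ Set.Ioo 0 Real.pi := by
    intro X Y hX hY hXY
    exact hpos X C Y (hncol X Y hX hY hXY).1
  -- angle at a line point towards C and another line point, in (0, π)
  have haL : ∀ X Y : Pt, X ∈ L → Y ∈ L → X ≠ Y → ∠ C X Y ∈ Set.Ioo 0 Real.pi := by
    intro X Y hX hY hXY
    exact hpos C X Y (hncol X Y hX hY hXY).2
  -- membership of angles in {α, β, γ}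
  set P5 : Set Pt := {A, B, C, D, E} with hP5
  have hmem : ∀ x y z : Pt, x ∈ P5 → y ∈ P5 → z ∈ P5 → x ≠ y → y ≠ z → x ≠ z →
      ∠ x y z ∈ Set.Ioo 0 Real.pi →
      (∠ x y z = α ∨ ∠ x y z = β ∨ ∠ x y z = γ) := by
    intro x y z hx hy hz hxy hyz hxz hIoo
    have : ∠ x y z ∈ angleSet P5 := ⟨hIoo, x, hx, y, hy, z, hz, hxy, hyz, hxz, rfl⟩
    rw [hP5, hset] at this
    simpa using this
  have hXC : ∀ X : Pt, X ∈ L → X ≠ C := fun X hX h => hCL (h ▸ hX)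
  -- distinctness
  have hAD : A ≠ D := hADE.left_ne
  have hDE : D ≠ E := hADE.ne_right
  have hEB : E ≠ B := hDEB.ne_right
  -- memberships of specific angles
  have memAP5 : A ∈ P5 := by simp [hP5]
  have memBP5 : B ∈ P5 := by simp [hP5]
  have memCP5 : C ∈ P5 := by simp [hP5]
  have memDP5 : D ∈ P5 := by simp [hP5]
  have memEP5 : E ∈ P5 := by simp [hP5]
  have hC3 : ∀ X Y : Pt, X ∈ P5 → Y ∈ P5 → X ∈ L → Y ∈ L → X ≠ Y →
      (∠ X C Y = α ∨ ∠ X C Y = β ∨ ∠ X C Y = γ) :=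
    fun X Y hx5 hy5 hX hY hXY =>
      hmem X C Y hx5 memCP5 hy5 (hXC X hX) (Ne.symm (hXC Y hY)) hXY (haC X Y hX hY hXY)
  have hL3 : ∀ X Y : Pt, X ∈ P5 → Y ∈ P5 → X ∈ L → Y ∈ L → X ≠ Y →
      (∠ C X Y = α ∨ ∠ C X Y = β ∨ ∠ C X Y = γ) :=
    fun X Y hx5 hy5 hX hY hXY =>
      hmem C X Y memCP5 hx5 hy5 (Ne.symm (hXC X hX)) hXY (Ne.symm (hXC Y hY))
        (haL X Y hX hY hXY)
  -- the specific membership facts we use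
  have hp := hC3 A D memAP5 memDP5 hAL hDL hAD                -- ∠ A C D
  have hq := hC3 A E memAP5 memEP5 hAL hEL hAE                -- ∠ A C E
  have hr := hC3 A B memAP5 memBP5 hAL hBL hAB                -- ∠ A C B
  have hm := hC3 D E memDP5 memEP5 hDL hEL hDE                -- ∠ D C E
  have hn := hC3 D B memDP5 memBP5 hDL hBL hDB                -- ∠ D C B
  have hu := hL3 D A memDP5 memAP5 hDL hAL (Ne.symm hAD)      -- ∠ C D A
  have hv' := hL3 E B memEP5 memBP5 hEL hBL hEB               -- ∠ C E B
  -- ray equalities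
  have hrA1 : ∠ C A D = ∠ C A B := angle_eq_angle_of_angle_eq_pi C hADB.angle₁₂₃_eq_pi
  have hrA2 : ∠ C A E = ∠ C A B := angle_eq_angle_of_angle_eq_pi C hAEB.angle₁₂₃_eq_pi
  have hrB1 : ∠ C B D = ∠ C B A := angle_eq_angle_of_angle_eq_pi C hADB.symm.angle₁₂₃_eq_pi
  have hrB2 : ∠ C B E = ∠ C B A := angle_eq_angle_of_angle_eq_pi C hAEB.symm.angle₁₂₃_eq_pi
  have hrD : ∠ C D E = ∠ C D B := angle_eq_angle_of_angle_eq_pi C hDEB.angle₁₂₃_eq_pi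
  have hrE : ∠ C E D = ∠ C E A := angle_eq_angle_of_angle_eq_pi C hADE.symm.angle₁₂₃_eq_pi
  -- supplementary angles
  have hsD : ∠ C D A + ∠ C D B = Real.pi :=
    angle_add_angle_eq_pi_of_angle_eq_pi C hADB.angle₁₂₃_eq_pi
  have hsE : ∠ C E A + ∠ C E B = Real.pi :=
    angle_add_angle_eq_pi_of_angle_eq_pi C hAEB.angle₁₂₃_eq_pi
  -- triangle angle sums, vertex C first argument
  have hT : ∀ X Y : Pt, X ∈ L → Y ∈ L →
      ∠ C X Y + ∠ X Y C + ∠ Y C X = Real.pi := fun X Y hX hY =>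
    angle_add_angle_add_angle_eq_pi Y (hXC X hX)
  have T1 := hT A D hAL hDL
  have T2 := hT A E hAL hEL
  have T3 := hT A B hAL hBL
  have T4 := hT D E hDL hEL
  have T5 := hT D B hDL hBL
  have T6 := hT E B hEL hBL
  -- normalize angle orders
  rw [angle_comm A D C, angle_comm D C A] at T1
  rw [angle_comm A E C, angle_comm E C A] at T2
  rw [angle_comm A B C, angle_comm B C A] at T3
  rw [angle_comm D E C, angle_comm E C D, hrD, hrE] at T4
  rw [angle_comm D B C, angle_comm B C D, hrB1] at T5
  rw [angle_comm E B C, angle_comm B C E, hrB2] at T6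
  rw [hrA1] at T1
  rw [hrA2] at T2
  -- positivity facts
  have hposa := haL A B hAL hBL hAB
  have hposb := haL B A hBL hAL (Ne.symm hAB)
  have hposm := haC D E hDL hEL hDE
  have hposs := haC E B hEL hBL hEB
  have hposu := haL D A hDL hAL (Ne.symm hAD)
  have hposv := haL E A hEL hAL (Ne.symm hAE)
  obtain ⟨hα0, hαπ⟩ := hα
  -- T1: ∠CAB + ∠CDA + ∠ACD = π
  -- T2: ∠CAB + ∠CEA + ∠ACE = π
  -- T3: ∠CAB + ∠CBA + ∠ACB = π
  -- T4: ∠CDB + ∠CEA + ∠DCE = π  (after hrD, hrE rewriting... check)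
  -- chain: ∠ACD < ∠ACE < ∠ACB
  have hchain1 : ∠ A C D < ∠ A C E := by
    have := hsD
    obtain ⟨hm0, -⟩ := hposm
    linarith [T1, T2, T4]
  have hchain2 : ∠ A C E < ∠ A C B := by
    obtain ⟨hs0, -⟩ := hposs
    linarith [T2, T3, T6, hsE]
  -- identify p = α, q = β, r = γ
  obtain ⟨hpα, hqβ, hrγ⟩ := tri_id hord1 hord2 hp hq hr hchain1 hchain2
  -- m = ∠DCE = β - α, so β = 2α
  have hmval : ∠ D C E = β - α := by linarith [T1, T2, T4, hsD]
  have hβ : β = 2 * α := by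
    rcases hm with h | h | h <;> linarith
  -- n = ∠DCB = γ - α, so γ = 3α
  have hnval : ∠ D C B = γ - α := by linarith [T1, T3, T5, hsD]
  have hγ3 : γ = 3 * α := by
    rcases hn with h | h | h <;> linarith
  -- v' = ∠CEB = a + 2α forces a = α
  have hv'val : ∠ C E B = ∠ C A B + 2 * α := by linarith [T2, hsE]
  have haval : ∠ C A B = α := by
    obtain ⟨ha0, -⟩ := hposa
    rcases hv' with h | h | h <;> linarith
  -- u = ∠CDA = b + 2α forces b = α
  have huval : ∠ C D A = ∠ C B A + 2 * α := by linarith [T5, hsD]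
  have hbval : ∠ C B A = α := by
    obtain ⟨hb0, -⟩ := hposb
    rcases hu with h | h | h <;> linarith
  refine ⟨hβ, hγ3, ?_⟩
  -- T3: α + α + 3α = π
  have : Real.pi = 5 * α := by linarith [T3]
  linarith
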